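/- Let R be a Noetherian ring and L an R-module. Define Att_R(L) := {𝔭 ∈ Spec R : 𝔭 = Ann_R(L/K) for some submodule K of L}. Then the set of minimal elements of V(Ann_R(L)) coincides with the set of minimal elements of Att_R(L); in particular Rad(Ann_R(L)) = ∩_{𝔭 ∈ Att_R(L)} 𝔭. -/
import Mathlib


open CategoryTheory
open scoped Classical

universe u

/-- Cohomological dimension `cd(J, M)`: the supremum of the integers `i` such that the
local cohomology module `H^i_J(M)` is nonzero (`⊥` if there are none). -/
noncomputable def cohDim {R : Type u} [CommRing R] (J : Ideal R) (M : ModuleCat.{u} R) :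
    WithBot ℕ∞ :=
  sSup {n : WithBot ℕ∞ | ∃ i : ℕ, n = i ∧ Nontrivial ((localCohomology J i).obj M)}

/-- Krull dimension of a module: the Krull dimension of its support. -/
noncomputable def modDim (R : Type u) [CommRing R] (M : Type u) [AddCommGroup M] [Module R M] :
    WithBot ℕ∞ :=
  Order.krullDim (Module.support R M)

/-- Attached primes in the general (Macdonald–Sharp style) sense: primes arising as
annihilators of quotients of `L`. -/
def attachedPrimes (R : Type u) [CommRing R] (L : Type u) [AddCommGroup L] [Module R L] :
    Set (Ideal R) :=
  {p | p.IsPrime ∧ ∃ K : Submodule R L, p = Module.annihilator R (L ⧸ K)}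

/-- `N` is a `p`-primary submodule of `M` (over a Noetherian ring this is the classical
notion): the set of associated primes of `M/N` is exactly `{p}`. -/
def IsPrimaryFor {R : Type u} [CommRing R] {M : Type u} [AddCommGroup M] [Module R M]
    (p : Ideal R) (N : Submodule R M) : Prop :=
  associatedPrimes R (M ⧸ N) = {p}

section Aux

variable {R : Type u} [CommRing R] {L : Type u} [AddCommGroup L] [Module R L]

lemma mem_ann_quot (K : Submodule R L) (r : R) :
    r ∈ Module.annihilator R (L ⧸ K) ↔ ∀ x : L, r • x ∈ K := by
  rw [Module.mem_annihilator]
  constructor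
  · intro h x
    have := h (Submodule.Quotient.mk x)
    rwa [← Submodule.Quotient.mk_smul, Submodule.Quotient.mk_eq_zero] at this
  · intro h m
    obtain ⟨x, rfl⟩ := Submodule.Quotient.mk_surjective K m
    rw [← Submodule.Quotient.mk_smul, Submodule.Quotient.mk_eq_zero]
    exact h x

lemma mem_ann_quot_comap (K : Submodule R L) (m r : R) :
    r ∈ Module.annihilator R (L ⧸ K.comap (LinearMap.lsmul R L m)) ↔
      m * r ∈ Module.annihilator R (L ⧸ K) := by
  simp only [mem_ann_quot, Submodule.mem_comap, LinearMap.lsmul_apply, mul_smul]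

lemma ann_le_of_attached {p : Ideal R} (hp : p ∈ attachedPrimes R L) :
    Module.annihilator R L ≤ p := by
  obtain ⟨hpr, K, rfl⟩ := hp
  intro r hr
  rw [mem_ann_quot]
  intro x
  rw [Module.mem_annihilator] at hr
  rw [hr x]
  exact K.zero_mem

lemma minimal_mem_attached [IsNoetherianRing R] (L : Type u) [AddCommGroup L] [Module R L]
    {p : Ideal R} (hp : p ∈ (Module.annihilator R L).minimalPrimes) :
    p ∈ attachedPrimes R L := by
  obtain ⟨⟨hpp, hle⟩, hmin⟩ := hp
  -- the set of annihilators of quotients of L contained in p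
  set T : Set (Ideal R) :=
    {a | (∃ K : Submodule R L, a = Module.annihilator R (L ⧸ K)) ∧ a ≤ p} with hT
  have hTne : T.Nonempty := by
    refine ⟨Module.annihilator R (L ⧸ (⊥ : Submodule R L)), ⟨⊥, rfl⟩, ?_⟩
    intro r hr
    apply hle
    rw [Module.mem_annihilator]
    intro x
    have := (mem_ann_quot (⊥ : Submodule R L) r).mp hr x
    simpa using this
  obtain ⟨a, haT, hamax⟩ :=
    (set_has_maximal_iff_noetherian.mpr (inferInstance : IsNoetherian R R)) T hTne
  obtain ⟨⟨K, hK⟩, hap⟩ := haT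
  -- maximality in the ≤ form
  have hmax' : ∀ b ∈ T, a ≤ b → b ≤ a := by
    intro b hb hab
    by_contra h
    exact hamax b hb (lt_of_le_of_ne hab (fun he => h (le_of_eq he.symm)))
  -- the quotient trick : b m := Ann(L/(K : m)) satisfies r ∈ b m ↔ m*r ∈ a
  have hbmem : ∀ m r : R,
      (r ∈ Module.annihilator R (L ⧸ K.comap (LinearMap.lsmul R L m)) ↔ m * r ∈ a) := by
    intro m r; rw [hK]; exact mem_ann_quot_comap K m r
  have hble : ∀ m : R, a ≤ Module.annihilator R (L ⧸ K.comap (LinearMap.lsmul R L m)) := by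
    intro m r hr
    exact (hbmem m r).mpr (Ideal.mul_mem_left a m hr)
  -- step 1 : a is p-primary
  have step : ∀ m r : R, m * r ∈ a → m ∉ p → r ∈ a := by
    intro m r hmr hmp
    set b := Module.annihilator R (L ⧸ K.comap (LinearMap.lsmul R L m)) with hb
    have hbT : b ∈ T := by
      refine ⟨⟨_, rfl⟩, ?_⟩
      intro u hu
      have : m * u ∈ a := (hbmem m u).mp hu
      have : m * u ∈ p := hap this
      rcases hpp.mem_or_mem this with h | h
      · exact absurd h hmp
      · exact h
    exact hmax' b hbT (hble m) ((hbmem m r).mpr hmr)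
  -- step 2 : t^n ∈ a → t ∈ a
  have pow_step : ∀ (n : ℕ) (t : R), t ^ n ∈ a → t ∈ a := by
    intro n
    induction n with
    | zero =>
      intro t ht
      simp only [pow_zero] at ht
      exact absurd ((Ideal.eq_top_iff_one p).mpr (hap ht)) hpp.ne_top
    | succ n ih =>
      intro t ht
      set b := Module.annihilator R (L ⧸ K.comap (LinearMap.lsmul R L (t ^ n))) with hb
      have htb : t ∈ b := (hbmem (t ^ n) t).mpr (by rwa [← pow_succ])
      by_cases hbp : b ≤ p
      · exact hmax' b ⟨⟨_, rfl⟩, hbp⟩ (hble (t ^ n)) htb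
      · obtain ⟨u, hub, hup⟩ := Set.not_subset.mp hbp
        have : t ^ n * u ∈ a := (hbmem (t ^ n) u).mp hub
        rw [mul_comm] at this
        exact ih t (step u (t ^ n) this hup)
  -- step 3 : for t ∈ p, some s * t^n ∈ a with s ∉ p
  have rad_step : ∀ t ∈ p, ∃ (n : ℕ) (s : R), s ∉ p ∧ s * t ^ n ∈ a := by
    intro t htp
    by_contra hcon
    push_neg at hcon
    set S : Submonoid R :=
      { carrier := {x | ∃ (s : R) (n : ℕ), s ∉ p ∧ x = s * t ^ n}
        one_mem' := ⟨1, 0, fun h => hpp.ne_top ((Ideal.eq_top_iff_one p).mpr h), by simp⟩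
        mul_mem' := by
          rintro x y ⟨s, n, hs, rfl⟩ ⟨s', n', hs', rfl⟩
          refine ⟨s * s', n + n', fun h => ?_, by ring⟩
          rcases hpp.mem_or_mem h with h | h
          · exact hs h
          · exact hs' h } with hS
    have hdis : Disjoint (a : Set R) (S : Set R) := by
      rw [Set.disjoint_left]
      rintro x hx ⟨s, n, hs, rfl⟩
      exact hcon n s hs hx
    obtain ⟨q, hq, haq, hqdis⟩ := Ideal.exists_le_prime_disjoint a S hdis
    have hqp : q ≤ p := by
      intro r hr
      by_contra hrp
      exact Set.disjoint_left.mp hqdis hr ⟨r, 0, hrp, by simp⟩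
    have hAq : Module.annihilator R L ≤ q := by
      intro r hr
      apply haq
      rw [hK, mem_ann_quot]
      intro x
      rw [Module.mem_annihilator] at hr
      rw [hr x]
      exact K.zero_mem
    have : p ≤ q := hmin ⟨hq, hAq⟩ hqp
    have htq : t ∈ q := this htp
    exact Set.disjoint_left.mp hqdis htq
      ⟨1, 1, fun h => hpp.ne_top ((Ideal.eq_top_iff_one p).mpr h), by simp⟩
  -- conclude : a = p
  have hpa : p ≤ a := by
    intro t htp
    obtain ⟨n, s, hsp, hsa⟩ := rad_step t htp
    exact pow_step n t (step s (t ^ n) hsa hsp)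
  have : a = p := le_antisymm hap hpa
  exact ⟨hpp, K, by rw [← hK, this]⟩

end Aux

theorem stmt13 {R : Type u} [CommRing R] [IsNoetherianRing R]
    (L : Type u) [AddCommGroup L] [Module R L] :
    {p ∈ {q : Ideal R | q.IsPrime ∧ Module.annihilator R L ≤ q} |
        ∀ q ∈ {q : Ideal R | q.IsPrime ∧ Module.annihilator R L ≤ q}, q ≤ p → q = p} =
      {p ∈ attachedPrimes R L | ∀ q ∈ attachedPrimes R L, q ≤ p → q = p} ∧
    (Module.annihilator R L).radical = ⨅ p ∈ attachedPrimes R L, p := by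
  have hattV : ∀ q ∈ attachedPrimes R L,
      q ∈ {q : Ideal R | q.IsPrime ∧ Module.annihilator R L ≤ q} :=
    fun q hq => ⟨hq.1, ann_le_of_attached hq⟩
  constructor
  · ext p
    simp only [Set.mem_sep_iff, Set.mem_setOf_eq]
    constructor
    · rintro ⟨hv, hminV⟩
      have hpMin : p ∈ (Module.annihilator R L).minimalPrimes := by
        refine ⟨hv, fun q hq hqp => ?_⟩
        exact le_of_eq (hminV q hq hqp).symm
      refine ⟨minimal_mem_attached L hpMin, fun q hq hqp => hminV q (hattV q hq) hqp⟩
    · rintro ⟨ha, hminA⟩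
      refine ⟨hattV p ha, fun q hq hqp => ?_⟩
      haveI : q.IsPrime := hq.1
      obtain ⟨q', hq', hq'q⟩ := Ideal.exists_minimalPrimes_le hq.2
      have hq'A : q' ∈ attachedPrimes R L := minimal_mem_attached L hq'
      have : q' = p := hminA q' hq'A (hq'q.trans hqp)
      exact le_antisymm hqp (this ▸ hq'q)
  · refine le_antisymm (le_iInf fun p => le_iInf fun hp => ?_) ?_
    · exact (hp.1.radical_le_iff).mpr (ann_le_of_attached hp)
    · rw [← Ideal.sInf_minimalPrimes]
      refine le_sInf fun q hq => ?_
      exact iInf₂_le q (minimal_mem_attached L hq)
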